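/- Let A be a Green's matrix with entries a_{ij} = p_{min(i,j)} * q_{max(i,j)}, and let α = {i_1 < ... < i_m}, β = {j_1 < ... < j_m}. If there exists some s with max(i_s,j_s) ≥ min(i_{s+1},j_{s+1}), then det A[α,β] = 0. -/

import Mathlib

open Matrix Submodule Module in
lemma green_aux (n m : ℕ) (p q : Fin n → ℝ) (A : Matrix (Fin n) (Fin n) ℝ)
    (hA : ∀ i j, A i j = p (min i j) * q (max i j))
    (r c : Fin (m + 1) → Fin n) (hr : StrictMono r) (hc : StrictMono c)
    (s : Fin m) (hrc : r s.succ ≤ c s.castSucc) :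
    (A.submatrix r c).det = 0 := by
  classical
  by_contra hd
  set M := A.submatrix r c with hM
  have hU : IsUnit M := (Matrix.isUnit_iff_isUnit_det M).mpr (isUnit_iff_ne_zero.mpr hd)
  have hli : LinearIndependent ℝ (fun j => Mᵀ j) :=
    Matrix.linearIndependent_cols_iff_isUnit.mpr hU
  set u : Fin (m + 1) → ℝ := fun i => if i ≤ s.succ then p (r i) else 0 with hu
  set w : Fin (m + 1) → (Fin (m + 1) → ℝ) := fun j =>
    if j < s.castSucc then Mᵀ j else if j = s.castSucc then u else Pi.single j 1 with hw
  set T : Finset (Fin (m + 1) → ℝ) := (Finset.univ.erase s.succ).image w with hT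
  have hTcard : T.card ≤ m := by
    refine (Finset.card_image_le).trans ?_
    simp
  have hcs : s.castSucc < s.succ := Fin.castSucc_lt_succ
  have huT : u ∈ (T : Set (Fin (m+1) → ℝ)) := by
    refine Finset.mem_coe.mpr (Finset.mem_image.mpr ⟨s.castSucc, ?_, ?_⟩)
    · exact Finset.mem_erase.mpr ⟨hcs.ne, Finset.mem_univ _⟩
    · simp [hw]
  have hsingleT : ∀ k, s.succ < k → Pi.single k (1:ℝ) ∈ (T : Set (Fin (m+1) → ℝ)) := by
    intro k hk
    refine Finset.mem_coe.mpr (Finset.mem_image.mpr ⟨k, ?_, ?_⟩)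
    · exact Finset.mem_erase.mpr ⟨hk.ne', Finset.mem_univ _⟩
    · have h1 : ¬ k < s.castSucc := not_lt.mpr (le_of_lt (hcs.trans hk))
      have h2 : k ≠ s.castSucc := (hcs.trans hk).ne'
      simp [hw, h1, h2]
  have hmem : ∀ j, Mᵀ j ∈ span ℝ (T : Set (Fin (m+1) → ℝ)) := by
    intro j
    rcases lt_or_ge j s.castSucc with hj | hj
    · apply subset_span
      exact Finset.mem_coe.mpr (Finset.mem_image.mpr ⟨j,
        Finset.mem_erase.mpr ⟨(hj.trans hcs).ne, Finset.mem_univ _⟩, by simp [hw, hj]⟩)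
    · have hdecomp : Mᵀ j = q (c j) • u + ∑ k ∈ Finset.Ioi s.succ, (M k j) • (Pi.single k (1:ℝ) : Fin (m+1) → ℝ) := by
        funext i
        have hval : M i j = A (r i) (c j) := rfl
        simp only [Pi.add_apply, Pi.smul_apply, Finset.sum_apply, smul_eq_mul,
          Pi.single_apply, mul_ite, mul_one, mul_zero, Finset.sum_ite_eq, Finset.mem_Ioi]
        rcases le_or_gt i s.succ with hi | hi
        · have hri : r i ≤ c j := le_trans (le_trans (hr.monotone hi) hrc) (hc.monotone hj)
          simp [not_lt.mpr hi, hu, hi, hval, hA, min_eq_left hri, max_eq_right hri, mul_comm]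
        · simp [hi, hu, not_le.mpr hi, hval, hM]
      rw [hdecomp]
      exact add_mem (smul_mem _ _ (subset_span huT))
        (sum_mem fun k hk => smul_mem _ _ (subset_span (hsingleT k (Finset.mem_Ioi.mp hk))))
  have hle : span ℝ (Set.range fun j => Mᵀ j) ≤ span ℝ (T : Set (Fin (m+1) → ℝ)) :=
    span_le.mpr (Set.range_subset_iff.mpr hmem)
  have h1 : finrank ℝ (span ℝ (Set.range fun j => Mᵀ j)) = m + 1 := by
    rw [finrank_span_eq_card hli, Fintype.card_fin]
  have h2 : finrank ℝ (span ℝ ((T : Finset (Fin (m+1) → ℝ)) : Set (Fin (m+1) → ℝ))) ≤ m :=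
    le_trans (finrank_span_finset_le_card T) hTcard
  have h3 := Submodule.finrank_mono hle
  omega

theorem green_matrix_minor_vanishes (n m : ℕ) (p q : Fin n → ℝ)
    (A : Matrix (Fin n) (Fin n) ℝ)
    (hA : ∀ i j, A i j = p (min i j) * q (max i j))
    (r c : Fin (m + 1) → Fin n) (hr : StrictMono r) (hc : StrictMono c)
    (hsep : ∃ s : Fin m, min (r s.succ) (c s.succ) ≤ max (r s.castSucc) (c s.castSucc)) :
    (A.submatrix r c).det = 0 := by
  obtain ⟨s, hs⟩ := hsep
  have hcs : s.castSucc < s.succ := Fin.castSucc_lt_succ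
  have key : r s.succ ≤ c s.castSucc ∨ c s.succ ≤ r s.castSucc := by
    by_contra hcon
    push_neg at hcon
    obtain ⟨h1, h2⟩ := hcon
    exact absurd hs (not_le.mpr (max_lt (lt_min (hr hcs) h2) (lt_min h1 (hc hcs))))
  rcases key with h | h
  · exact green_aux n m p q A hA r c hr hc s h
  · have hsym : A.transpose = A := by
      ext i j
      simp [Matrix.transpose_apply, hA, min_comm, max_comm]
    rw [← Matrix.det_transpose, Matrix.transpose_submatrix, hsym]
    exact green_aux n m p q A hA c r hc hr s h
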